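/- Let (Ω, ℱ, P) be a probability space with filtration (ℱ_t)_{t=0}^T and let C = (C_t) be an adapted sequence of closed convex sets (a convex market model). Define A_T(C) = L^0(C_0,ℱ_0) + ⋯ + L^0(C_T,ℱ_T) (sums of measurable selections) and A(C) = {adapted c = (c_0,…,c_T) | ∃ adapted x with x_{-1}=0, x_T=0 and x_t − x_{t−1} + c_t ∈ C_t a.s. for all t}. Then a claim process c belongs to A(C) if and only if ∑_{t=0}^T c_t ∈ A_T(C). -/

import Mathlib

open MeasureTheory Finset

lemma telescope_aux {α : Type*} [AddCommGroup α] (f : ℕ → α) (n : ℕ) :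
    ∑ t ∈ range (n + 1), (f t - if t = 0 then 0 else f (t - 1)) = f n := by
  induction n with
  | zero => simp
  | succ n ih => rw [Finset.sum_range_succ, ih]; simp

/-- A claim process `c` can be superhedged at zero cost (i.e. `c ∈ A(C)`) iff the total
claim `∑ₜ cₜ` is a sum of measurable selections of the solvency regions
(i.e. `∑ₜ cₜ ∈ A_T(C)`). -/
theorem mem_A_iff_sum_mem_AT {Ω : Type*} [m0 : MeasurableSpace Ω]
    (P : Measure Ω) [IsProbabilityMeasure P] (d T : ℕ)
    (F : ℕ → MeasurableSpace Ω) (hF : ∀ t, F t ≤ m0) (hmono : ∀ s t, s ≤ t → F s ≤ F t)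
    (C : ℕ → Ω → Set (Fin d → ℝ))
    (hCneg : ∀ t, ∀ ω, {v : Fin d → ℝ | ∀ i, v i ≤ 0} ⊆ C t ω)
    (hCclosed : ∀ t ω, IsClosed (C t ω)) (hCconv : ∀ t ω, Convex ℝ (C t ω))
    (c : ℕ → Ω → Fin d → ℝ) (hc : ∀ t, Measurable[F t] (c t)) :
    (∃ x : ℕ → Ω → Fin d → ℝ, (∀ t, Measurable[F t] (x t)) ∧
        (∀ᵐ ω ∂P, x T ω = 0) ∧
        (∀ t ≤ T, ∀ᵐ ω ∂P,
          x t ω - (if t = 0 then 0 else x (t - 1) ω) + c t ω ∈ C t ω)) ↔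
      (∃ w : ℕ → Ω → Fin d → ℝ, (∀ t, Measurable[F t] (w t)) ∧
        (∀ t ≤ T, ∀ᵐ ω ∂P, w t ω ∈ C t ω) ∧
        (∀ᵐ ω ∂P, ∑ t ∈ range (T + 1), c t ω = ∑ t ∈ range (T + 1), w t ω)) := by
  constructor
  · rintro ⟨x, hxm, hxT, hxc⟩
    refine ⟨fun t ω => x t ω - (if t = 0 then 0 else x (t - 1) ω) + c t ω, ?_, ?_, ?_⟩
    · intro t
      have h1 : Measurable[F t] (fun ω => (if t = 0 then (0 : Fin d → ℝ) else x (t - 1) ω)) := by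
        by_cases ht : t = 0
        · simp only [ht, if_pos]; exact measurable_const
        · simp [ht]; exact (hxm (t - 1)).mono (hmono _ _ (Nat.sub_le t 1)) le_rfl
      exact ((hxm t).sub h1).add (hc t)
    · exact hxc
    · filter_upwards [hxT] with ω hω
      rw [Finset.sum_add_distrib, telescope_aux (fun t => x t ω) T, hω, zero_add]
  · rintro ⟨w, hwm, hwC, hsum⟩
    refine ⟨fun t ω => ∑ s ∈ range (t + 1), (w s ω - c s ω), ?_, ?_, ?_⟩
    · intro t
      apply Finset.measurable_sum
      intro s hs
      have hst : s ≤ t := Nat.lt_succ_iff.mp (Finset.mem_range.mp hs)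
      exact ((hwm s).mono (hmono _ _ hst) le_rfl).sub ((hc s).mono (hmono _ _ hst) le_rfl)
    · filter_upwards [hsum] with ω hω
      have : ∑ s ∈ range (T + 1), (w s ω - c s ω) = 0 := by
        rw [Finset.sum_sub_distrib, ← hω, sub_self]
      exact this
    · intro t ht
      filter_upwards [hwC t ht] with ω hω
      have key : (∑ s ∈ range (t + 1), (w s ω - c s ω)) -
          (if t = 0 then 0 else ∑ s ∈ range ((t - 1) + 1), (w s ω - c s ω)) + c t ω
          = w t ω := by
        by_cases h0 : t = 0
        · subst h0; simp
        · rw [if_neg h0, Nat.sub_add_cancel (Nat.one_le_iff_ne_zero.mpr h0),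
            Finset.sum_range_succ]
          ring_nf
        
      rw [key]; exact hω
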